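/- If v is obtained from a reduced n-expression u by one application of a commutation relation s_i s_j = s_j s_i with |i-j| ≥ 2, then S(v) is obtained from S(u) by transposing the two adjacent names at the corresponding positions, which are disjoint pairs {p,q} and {p',q'}; all other names are unchanged. -/

import Mathlib

open scoped Classical

noncomputable section

/-- adjacent transposition `s i = (i, i+1)` acting on ℕ (1-indexed positions) -/
def s (i : ℕ) : Equiv.Perm ℕ := Equiv.swap i (i + 1)

/-- permutation represented by a word; letters are applied left to right
(`wperm (u ++ v) = wperm v * wperm u`, i.e. `u` first, then `v`). -/
def wperm (w : List ℕ) : Equiv.Perm ℕ := ((w.map s).reverse).prod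

/-- `w` is an `n`-expression: a word in the letters `s 1, ..., s (n-1)` -/
def IsExpr (n : ℕ) (w : List ℕ) : Prop := ∀ i ∈ w, 1 ≤ i ∧ i + 1 ≤ n

/-- set of inversions of a permutation of `{1,...,n}` -/
def invSet (n : ℕ) (π : Equiv.Perm ℕ) : Finset (ℕ × ℕ) :=
  (Finset.Icc 1 n ×ˢ Finset.Icc 1 n).filter (fun pq => pq.1 < pq.2 ∧ π pq.2 < π pq.1)

/-- a reduced `n`-expression: its length equals the inversion number of the
permutation it represents -/
def ReducedExpr (n : ℕ) (w : List ℕ) : Prop :=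
  IsExpr n w ∧ w.length = (invSet n (wperm w)).card

/-- one application of a braid relation `s i s j s i = s j s i s j`, `|i-j| = 1` -/
inductive StepI : List ℕ → List ℕ → Prop
  | mk (a b : List ℕ) (i j : ℕ) (h : i + 1 = j ∨ j + 1 = i) :
      StepI (a ++ i :: j :: i :: b) (a ++ j :: i :: j :: b)

/-- one application of a commutation relation `s i s j = s j s i`, `|i-j| ≥ 2` -/
inductive StepII : List ℕ → List ℕ → Prop
  | mk (a b : List ℕ) (i j : ℕ) (h : i + 2 ≤ j ∨ j + 2 ≤ i) :
      StepII (a ++ i :: j :: b) (a ++ j :: i :: b)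

def BraidStep (u v : List ℕ) : Prop := StepI u v ∨ StepII u v

/-- `c` is a derivation from `u` to `v` by braid relations -/
def IsDeriv (u v : List ℕ) (c : List (List ℕ)) : Prop :=
  c.Chain' BraidStep ∧ c.head? = some u ∧ c.getLast? = some v

/-- combinatorial distance: minimal number of braid relations transforming `u` into `v` -/
def dist (u v : List ℕ) : ℕ :=
  sInf {k | ∃ c, IsDeriv u v c ∧ c.length = k + 1}

/-- the word `s_{j,i} = s_{j-1} s_{j-2} ... s_i` (empty if `j ≤ i`) -/
def sji (j i : ℕ) : List ℕ := (List.range (j - i)).map (fun k => j - 1 - k)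

/-- the normal word `s_{1,f(1)} s_{2,f(2)} ... s_{n,f(n)}` -/
def normalWord (n : ℕ) (f : ℕ → ℕ) : List ℕ :=
  ((List.range n).map (fun k => sji (k + 1) (f (k + 1)))).flatten

/-- `f : {1,...,n} → {1,...,n}` with `1 ≤ f i ≤ i` for all `i` -/
def IsNormalFun (n : ℕ) (f : ℕ → ℕ) : Prop := ∀ i ∈ Finset.Icc 1 n, 1 ≤ f i ∧ f i ≤ i

/-- names of the successive crossings: the name of a letter is the pair of starting
positions of the two strands crossing there -/
def namesAux : Equiv.Perm ℕ → List ℕ → List (Finset ℕ)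
  | _, [] => []
  | π, i :: rest => ({π⁻¹ i, π⁻¹ (i + 1)} : Finset ℕ) :: namesAux (s i * π) rest

/-- the name sequence `S(w)` of a word -/
def names (w : List ℕ) : List (Finset ℕ) := namesAux 1 w

/-- two entries occur in the same relative order in `S` and `S'` -/
def sameOrder (S S' : List (Finset ℕ)) (a b : Finset ℕ) : Prop :=
  (S.idxOf a < S.idxOf b) ↔ (S'.idxOf a < S'.idxOf b)

/-- `I₃(S,S')`: number of triples `{p,q,r} ⊆ {1,...,n}` such that the relative order of
the three pairs `{p,q}, {p,r}, {q,r}` is not the same in `S` and `S'` -/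
def I3 (n : ℕ) (S S' : List (Finset ℕ)) : ℕ :=
  (((Finset.Icc 1 n).powersetCard 3).filter (fun t =>
    ¬ ∀ a ∈ t.powersetCard 2, ∀ b ∈ t.powersetCard 2, sameOrder S S' a b)).card

/-- `I₂,₂(S,S')`: number of unordered pairs of disjoint pairs in `{1,...,n}` whose
relative order is not the same in `S` and `S'` -/
def I22 (n : ℕ) (S S' : List (Finset ℕ)) : ℕ :=
  ((((Finset.Icc 1 n).powersetCard 2).powersetCard 2).filter (fun P =>
    (∀ a ∈ P, ∀ b ∈ P, a ≠ b → Disjoint a b) ∧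
    ¬ ∀ a ∈ P, ∀ b ∈ P, sameOrder S S' a b)).card

/-- total number of unordered pairs of entries whose relative order differs -/
def InvCount (S S' : List (Finset ℕ)) : ℕ :=
  ((S.toFinset.powersetCard 2).filter (fun P =>
    ¬ ∀ a ∈ P, ∀ b ∈ P, sameOrder S S' a b)).card

/-- number of type I steps in a derivation -/
def countStepsI (c : List (List ℕ)) : ℕ :=
  ((Finset.range (c.length - 1)).filter (fun k => StepI (c.getD k []) (c.getD (k + 1) []))).card

/-- number of type II steps in a derivation -/
def countStepsII (c : List (List ℕ)) : ℕ :=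
  ((Finset.range (c.length - 1)).filter (fun k => StepII (c.getD k []) (c.getD (k + 1) []))).card

/-- position of the strand starting at position `p` after the first `k` letters of `w` -/
def strandPos (w : List ℕ) (p k : ℕ) : ℕ := wperm (w.take k) p

/-- number of unit squares to the right of the `n`-th strand in the braid diagram of `w`,
drawn on an `(n-1) × length w` grid -/
def area (n : ℕ) (w : List ℕ) : ℕ :=
  ((List.range w.length).map (fun k => n - max (strandPos w n k) (strandPos w n (k + 1)))).sum

/-- `u_n = s_{1,1} s_{2,1} ... s_{n,1}` -/
def uWord (n : ℕ) : List ℕ := ((List.range n).map (fun k => sji (k + 1) 1)).flatten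

/-- `v_n = s_{n,1} s_{n,2} ... s_{n,n-1}` -/
def vWord (n : ℕ) : List ℕ := ((List.range (n - 1)).map (fun k => sji n (k + 1))).flatten



lemma wperm_cons (x : ℕ) (t : List ℕ) : wperm (x :: t) = wperm t * s x := by
  simp [wperm]

lemma namesAux_append (x y : List ℕ) : ∀ π : Equiv.Perm ℕ,
    namesAux π (x ++ y) = namesAux π x ++ namesAux (wperm x * π) y := by
  induction x with
  | nil => intro π; simp [namesAux, wperm]
  | cons h t ih =>
    intro π
    simp only [List.cons_append, namesAux, wperm_cons, mul_assoc, List.append_eq]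
    rw [ih]

lemma namesAux_length (w : List ℕ) : ∀ π : Equiv.Perm ℕ, (namesAux π w).length = w.length := by
  induction w with
  | nil => intro π; rfl
  | cons h t ih => intro π; simp [namesAux, ih]

lemma s_apply_of_far {i j : ℕ} (h : i + 2 ≤ j ∨ j + 2 ≤ i) : s i j = j := by
  apply Equiv.swap_apply_of_ne_of_ne <;> omega

lemma s_apply_of_far' {i j : ℕ} (h : i + 2 ≤ j ∨ j + 2 ≤ i) : s i (j + 1) = j + 1 := by
  apply Equiv.swap_apply_of_ne_of_ne <;> omega

lemma s_comm {i j : ℕ} (h : i + 2 ≤ j ∨ j + 2 ≤ i) : s i * s j = s j * s i := by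
  ext x
  simp only [Equiv.Perm.mul_apply, s, Equiv.swap_apply_def]
  split_ifs <;> omega

lemma s_inv (i : ℕ) : (s i)⁻¹ = s i := by simp [s]

/-- Applying one commutation relation to a reduced `n`-expression transposes two
adjacent names, which are disjoint pairs, leaving all other names unchanged. -/
theorem names_stepII (n : ℕ) (u v : List ℕ) (hu : ReducedExpr n u) (h : StepII u v) :
    ∃ (k : ℕ) (a b : Finset ℕ), Disjoint a b ∧
      names u = (names u).take k ++ [a, b] ++ (names u).drop (k + 2) ∧
      names v = (names u).take k ++ [b, a] ++ (names u).drop (k + 2) := by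
  clear hu
  obtain ⟨a0, b0, i, j, hij⟩ := h
  set π : Equiv.Perm ℕ := wperm a0 with hπ
  refine ⟨a0.length, {π⁻¹ i, π⁻¹ (i + 1)}, {π⁻¹ j, π⁻¹ (j + 1)}, ?_, ?_, ?_⟩
  · have h1 : i ≠ j := by omega
    have h2 : i ≠ j + 1 := by omega
    have h3 : i + 1 ≠ j := by omega
    have h4 : i + 1 ≠ j + 1 := by omega
    simp only [Finset.disjoint_left, Finset.mem_insert, Finset.mem_singleton]
    rintro p (rfl | rfl) hp <;>
      rcases hp with hp | hp <;>
      exact absurd (π⁻¹.injective hp) (by assumption)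
  all_goals {
    have key : ∀ x y : ℕ, (x + 2 ≤ y ∨ y + 2 ≤ x) →
        names (a0 ++ x :: y :: b0) =
          namesAux 1 a0 ++ [({π⁻¹ x, π⁻¹ (x + 1)} : Finset ℕ), {π⁻¹ y, π⁻¹ (y + 1)}]
            ++ namesAux (s y * s x * π) b0 := by
      intro x y hxy
      have hfix : (s x * π)⁻¹ y = π⁻¹ y := by
        rw [mul_inv_rev, Equiv.Perm.mul_apply, s_inv, s_apply_of_far hxy]
      have hfix' : (s x * π)⁻¹ (y + 1) = π⁻¹ (y + 1) := by
        rw [mul_inv_rev, Equiv.Perm.mul_apply, s_inv, s_apply_of_far' hxy]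
      simp only [names, namesAux_append, namesAux, mul_one, hfix, hfix', hπ]
      simp [mul_assoc]
      rw [show (Equiv.symm (s x)) y = y from s_apply_of_far hxy,
        show (Equiv.symm (s x)) (y + 1) = y + 1 from s_apply_of_far' hxy]
    have hu1 := key i j hij
    have hv1 := key j i (by omega)
    have hcomm : s i * s j * π = s j * s i * π := by rw [s_comm hij]
    rw [hcomm] at hv1
    have htake : (names (a0 ++ i :: j :: b0)).take a0.length = namesAux 1 a0 := by
      rw [hu1, List.append_assoc, List.take_append_of_le_length (by rw [namesAux_length]),
        List.take_of_length_le (by rw [namesAux_length])]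
    have hdrop : (names (a0 ++ i :: j :: b0)).drop (a0.length + 2) =
        namesAux (s j * s i * π) b0 := by
      rw [hu1, show namesAux 1 a0 ++ [({π⁻¹ i, π⁻¹ (i+1)} : Finset ℕ), {π⁻¹ j, π⁻¹ (j+1)}]
            ++ namesAux (s j * s i * π) b0
          = (namesAux 1 a0 ++ [({π⁻¹ i, π⁻¹ (i+1)} : Finset ℕ), {π⁻¹ j, π⁻¹ (j+1)}])
            ++ namesAux (s j * s i * π) b0 from by rw [List.append_assoc]]
      rw [List.drop_append_of_le_length (by simp [namesAux_length])]
      simp [namesAux_length]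
    rw [htake, hdrop]
    first
      | exact hu1
      | exact hv1
  }

end
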